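/- Let M be a pointed metric space, p ≠ q ∈ M with [p,q] = {p,q}, and let f_{pq} be the magic function. If μ = Σᵢ aᵢ m_{pᵢqᵢ} is a finitely supported element of F(M) with Σᵢ |aᵢ| ≤ 1 and ⟨μ, f_{pq}⟩ = 1, then μ = m_{pq}. In particular, f_{pq} exposes m_{pq} among finitely supported elements of the unit ball. -/

import Mathlib

noncomputable section

open Metric Set

/-- The space of real-valued Lipschitz functions on `M` vanishing at `base`. -/
structure Lip0 (M : Type*) [MetricSpace M] (base : M) where
  toFun : M → ℝ
  exists_lip' : ∃ K, LipschitzWith K toFun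
  map_base' : toFun base = 0

namespace Lip0

variable {M : Type*} [MetricSpace M] {base : M}

instance : FunLike (Lip0 M base) M ℝ where
  coe := toFun
  coe_injective := by rintro ⟨f, _, _⟩ ⟨g, _, _⟩ h; simpa using h

@[simp] lemma map_base (f : Lip0 M base) : f base = 0 := f.map_base'

/-- The set of (nonnegative real) Lipschitz constants of `f`. -/
def lipSet (f : Lip0 M base) : Set ℝ :=
  {K | 0 ≤ K ∧ ∀ x y, |f x - f y| ≤ K * dist x y}

lemma lipSet_nonempty (f : Lip0 M base) : (lipSet f).Nonempty := by
  obtain ⟨K, hK⟩ := f.exists_lip'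
  exact ⟨K, K.coe_nonneg, fun x y => by
    have h := hK.dist_le_mul x y; rw [Real.dist_eq] at h; exact h⟩

lemma lipSet_bddBelow (f : Lip0 M base) : BddBelow (lipSet f) :=
  ⟨0, fun K hK => hK.1⟩

lemma sInf_mem_lipSet (f : Lip0 M base) : sInf (lipSet f) ∈ lipSet f := by
  constructor
  · exact le_csInf (lipSet_nonempty f) fun K hK => hK.1
  · intro x y
    rcases eq_or_ne x y with rfl | hxy
    · simp
    · have hd : 0 < dist x y := dist_pos.2 hxy
      rw [← div_le_iff₀ hd]
      exact le_csInf (lipSet_nonempty f) fun K hK => (div_le_iff₀ hd).2 (hK.2 x y)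

instance : Zero (Lip0 M base) :=
  ⟨⟨fun _ => 0, ⟨0, LipschitzWith.const 0⟩, rfl⟩⟩

instance : Add (Lip0 M base) :=
  ⟨fun f g => ⟨fun t => f t + g t, by
    obtain ⟨Kf, hf⟩ := f.exists_lip'; obtain ⟨Kg, hg⟩ := g.exists_lip'
    exact ⟨Kf + Kg, hf.add hg⟩, by simp⟩⟩

instance : Neg (Lip0 M base) :=
  ⟨fun f => ⟨fun t => -f t, by
    obtain ⟨Kf, hf⟩ := f.exists_lip'
    exact ⟨Kf, hf.neg⟩, by simp⟩⟩

def rsmul (c : ℝ) (f : Lip0 M base) : Lip0 M base :=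
  ⟨fun t => c * f t, by
    obtain ⟨Kf, hf⟩ := f.exists_lip'
    refine ⟨⟨|c|, abs_nonneg c⟩ * Kf, LipschitzWith.of_dist_le_mul fun x y => ?_⟩
    have h1 : dist (c * f x) (c * f y) = |c| * |f x - f y| := by
      rw [Real.dist_eq, ← abs_mul, mul_sub]
    have h2 := hf.dist_le_mul x y
    rw [Real.dist_eq] at h2
    rw [h1]
    calc |c| * |f x - f y| ≤ |c| * (Kf * dist x y) :=
          mul_le_mul_of_nonneg_left h2 (abs_nonneg c)
      _ = (⟨|c|, abs_nonneg c⟩ * Kf : NNReal) * dist x y := by show _ = (|c| * (Kf : ℝ)) * dist x y; ring, by simp⟩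

instance : SMul ℝ (Lip0 M base) := ⟨rsmul⟩
instance : SMul ℕ (Lip0 M base) := ⟨fun n => rsmul (n : ℝ)⟩
instance : SMul ℤ (Lip0 M base) := ⟨fun n => rsmul (n : ℝ)⟩
instance : Sub (Lip0 M base) := ⟨fun f g => f + -g⟩

@[simp] lemma coe_zero : ⇑(0 : Lip0 M base) = fun _ => 0 := rfl
@[simp] lemma coe_add (f g : Lip0 M base) : ⇑(f + g) = fun t => f t + g t := rfl
@[simp] lemma coe_neg (f : Lip0 M base) : ⇑(-f) = fun t => -f t := rfl
@[simp] lemma coe_smul (c : ℝ) (f : Lip0 M base) : ⇑(c • f) = fun t => c * f t := rfl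
@[simp] lemma coe_sub (f g : Lip0 M base) : ⇑(f - g) = fun t => f t - g t := by
  show (fun t => f t + -(g t)) = _
  funext t; ring

instance : AddCommGroup (Lip0 M base) :=
  (DFunLike.coe_injective (F := Lip0 M base)).addCommGroup _
    rfl (fun _ _ => rfl) (fun _ => rfl) (fun f g => coe_sub f g)
    (fun f n => by funext t; show (n : ℝ) * f t = n • f t; simp)
    (fun f n => by funext t; show (n : ℝ) * f t = n • f t; simp)

instance : Module ℝ (Lip0 M base) :=
  (DFunLike.coe_injective (F := Lip0 M base)).module ℝ
    { toFun := fun f : Lip0 M base => ⇑f, map_zero' := rfl, map_add' := fun _ _ => rfl }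
    (fun _ _ => rfl)

lemma lipSet_neg (f : Lip0 M base) : lipSet (-f) = lipSet f := by
  unfold lipSet
  ext K
  have e : ∀ x y : M, (-f) x - (-f) y = -(f x - f y) := fun x y => by
    show -f x - -f y = -(f x - f y); ring
  constructor <;> rintro ⟨h0, h⟩ <;> refine ⟨h0, fun x y => ?_⟩
  · have := h x y; rwa [e, abs_neg] at this
  · rw [e, abs_neg]; exact h x y

instance : NormedAddCommGroup (Lip0 M base) :=
  AddGroupNorm.toNormedAddCommGroup
  { toFun := fun f => sInf (lipSet f)
    map_zero' := by
      apply le_antisymm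
      · exact csInf_le (lipSet_bddBelow _) ⟨le_refl 0, fun x y => by simp⟩
      · exact (sInf_mem_lipSet (0 : Lip0 M base)).1
    add_le' := fun f g => by
      apply csInf_le (lipSet_bddBelow _)
      refine ⟨add_nonneg (sInf_mem_lipSet f).1 (sInf_mem_lipSet g).1, fun x y => ?_⟩
      have hf := (sInf_mem_lipSet f).2 x y
      have hg := (sInf_mem_lipSet g).2 x y
      calc |(f + g) x - (f + g) y| = |(f x - f y) + (g x - g y)| := by
            simp [coe_add]; ring_nf
        _ ≤ |f x - f y| + |g x - g y| := abs_add_le _ _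
        _ ≤ sInf (lipSet f) * dist x y + sInf (lipSet g) * dist x y := add_le_add hf hg
        _ = (sInf (lipSet f) + sInf (lipSet g)) * dist x y := by ring
    neg' := fun f => by show sInf (lipSet (-f)) = sInf (lipSet f); rw [lipSet_neg]
    eq_zero_of_map_eq_zero' := fun f hf => by
      have hf' : sInf (lipSet f) = 0 := hf
      apply DFunLike.coe_injective
      funext t
      have h := (sInf_mem_lipSet f).2 t base
      rw [hf', zero_mul] at h
      have h0 : f t - f base = 0 := abs_nonpos_iff.1 h
      show f t = (0 : Lip0 M base) t
      have : (0 : Lip0 M base) t = 0 := rfl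
      rw [this]
      simpa using h0 }

lemma norm_def (f : Lip0 M base) : ‖f‖ = sInf (lipSet f) := rfl

instance : NormedSpace ℝ (Lip0 M base) where
  norm_smul_le c f := by
    rw [norm_def, norm_def, Real.norm_eq_abs]
    apply csInf_le (lipSet_bddBelow _)
    refine ⟨mul_nonneg (abs_nonneg c) (sInf_mem_lipSet f).1, fun x y => ?_⟩
    have hf := (sInf_mem_lipSet f).2 x y
    calc |(c • f) x - (c • f) y| = |c| * |f x - f y| := by
          rw [coe_smul]; rw [← abs_mul]; ring_nf
      _ ≤ |c| * (sInf (lipSet f) * dist x y) :=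
          mul_le_mul_of_nonneg_left hf (abs_nonneg c)
      _ = |c| * sInf (lipSet f) * dist x y := by ring

lemma norm_apply_le (f : Lip0 M base) (x y : M) : |f x - f y| ≤ ‖f‖ * dist x y :=
  (sInf_mem_lipSet f).2 x y

end Lip0

open Lip0 NormedSpace

variable (M : Type*) [MetricSpace M]

/-- The Dirac evaluation functional at `x`. -/
def deltaF (base x : M) : StrongDual ℝ (Lip0 M base) :=
  LinearMap.mkContinuous
    { toFun := fun f => f x
      map_add' := fun _ _ => rfl
      map_smul' := fun _ _ => rfl }
    (dist x base)
    (fun f => by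
      have h := Lip0.norm_apply_le f x base
      simp only [Lip0.map_base, sub_zero] at h
      rw [Real.norm_eq_abs, mul_comm]; exact h)

variable {M}

@[simp] lemma deltaF_apply (base x : M) (f : Lip0 M base) : deltaF M base x f = f x := rfl

/-- The molecule `(δ x - δ y)/d(x,y)`. -/
def molecule (base x y : M) : StrongDual ℝ (Lip0 M base) :=
  (dist x y)⁻¹ • (deltaF M base x - deltaF M base y)

variable (M) in
/-- The Lipschitz-free space over `M`, realized as the closed linear span of the Dirac
evaluations inside the dual of `Lip0 M base`. -/
def FreeSpace (base : M) : Submodule ℝ (StrongDual ℝ (Lip0 M base)) :=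
  (Submodule.span ℝ (Set.range (deltaF M base))).topologicalClosure

variable (M) in
/-- The subspace of the free space generated by the Diracs of a subset `S ⊆ M`. -/
def FreeSpaceOn (base : M) (S : Set M) : Submodule ℝ (StrongDual ℝ (Lip0 M base)) :=
  (Submodule.span ℝ (deltaF M base '' S)).topologicalClosure

lemma deltaF_mem (base x : M) : deltaF M base x ∈ FreeSpace M base :=
  Submodule.le_topologicalClosure _ (Submodule.subset_span ⟨x, rfl⟩)

lemma molecule_mem (base x y : M) : molecule base x y ∈ FreeSpace M base :=
  Submodule.smul_mem _ _ (Submodule.sub_mem _ (deltaF_mem base x) (deltaF_mem base y))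

/-- The molecule as an element of the free space. -/
def mol (base x y : M) : ↥(FreeSpace M base) := ⟨molecule base x y, molecule_mem base x y⟩

/-- The "magic function" of Ivakhno, Kadets and Werner associated to the pair `(p, q)`,
with base point `o`. -/
def magicFun (o p q : M) (t : M) : ℝ :=
  (dist p q / 2) *
    ((dist t q - dist t p) / (dist t q + dist t p) -
      (dist o q - dist o p) / (dist o q + dist o p))


section AuxMagic

variable {M : Type*} [MetricSpace M]

lemma molecule_apply' (o u v : M) (f : Lip0 M o) :
    molecule o u v f = (dist u v)⁻¹ * (f u - f v) := by
  simp [molecule]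

lemma molecule_symm' (o u v : M) : molecule o v u = -molecule o u v := by
  unfold molecule
  rw [dist_comm]
  ext f
  simp
  ring

set_option maxHeartbeats 1000000 in
/-- Key inequality/equality case for the magic function. -/
lemma magic_key (o p q u v : M) (hpq : p ≠ q)
    (hseg : {z : M | dist p q = dist z p + dist z q} = {p, q}) (huv : u ≠ v) :
    magicFun o p q u - magicFun o p q v ≤ dist u v ∧
      (magicFun o p q u - magicFun o p q v = dist u v → u = p ∧ v = q) := by
  set A := dist u p with hA
  set B := dist u q with hB
  set C := dist v p with hC
  set D := dist v q with hD
  set r := dist u v with hr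
  set s := dist p q with hs
  have hs0 : 0 < s := dist_pos.2 hpq
  have hr0 : 0 < r := dist_pos.2 huv
  have hA0 : 0 ≤ A := dist_nonneg
  have hB0 : 0 ≤ B := dist_nonneg
  have hC0 : 0 ≤ C := dist_nonneg
  have hD0 : 0 ≤ D := dist_nonneg
  have hAB : s ≤ A + B := by
    have := dist_triangle p u q
    rw [dist_comm p u] at this
    simpa [hA, hB, hs] using this
  have hCD : s ≤ C + D := by
    have := dist_triangle p v q
    rw [dist_comm p v] at this
    simpa [hC, hD, hs] using this
  have hCA : C ≤ r + A := by
    have := dist_triangle v u p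
    rw [dist_comm v u] at this
    simpa [hC, hr, hA] using this
  have hBD : B ≤ r + D := by
    have := dist_triangle u v q
    simpa [hB, hr, hD] using this
  have hABp : 0 < A + B := lt_of_lt_of_le hs0 hAB
  have hCDp : 0 < C + D := lt_of_lt_of_le hs0 hCD
  have heq : magicFun o p q u - magicFun o p q v =
      s * (B * C - A * D) / ((A + B) * (C + D)) := by
    have h1 : magicFun o p q u - magicFun o p q v =
        (s / 2) * ((B - A) / (B + A) - (D - C) / (D + C)) := by
      unfold magicFun
      rw [← hA, ← hB, ← hC, ← hD, ← hs]
      ring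
    rw [h1]
    have hBA : B + A ≠ 0 := by linarith
    have hDC : D + C ≠ 0 := by linarith
    field_simp
    ring
  -- the fundamental algebraic inequality
  have key1 : B * C - A * D ≤ r * (A + B) := by nlinarith
  have key2a : s * (B * C - A * D) ≤ s * (r * (A + B)) :=
    mul_le_mul_of_nonneg_left key1 hs0.le
  have key2b : s * (r * (A + B)) ≤ (C + D) * (r * (A + B)) :=
    mul_le_mul_of_nonneg_right hCD (by positivity)
  have key2 : s * (B * C - A * D) ≤ r * ((A + B) * (C + D)) := by nlinarith [key2a, key2b]
  constructor
  · rw [heq, div_le_iff₀ (by positivity)]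
    linarith [key2]
  · intro he
    rw [heq, div_eq_iff (by positivity : (A + B) * (C + D) ≠ 0)] at he
    -- equalities throughout the chain
    have hrABp : (0:ℝ) < r * (A + B) := by positivity
    have e2 : s = C + D := by
      have hcc : s * (r * (A + B)) = (C + D) * (r * (A + B)) :=
        le_antisymm key2b (by nlinarith [key2a, he])
      exact mul_right_cancel₀ (ne_of_gt hrABp) hcc
    have e1 : B * C - A * D = r * (A + B) := by
      have h3 : s * (B * C - A * D) = s * (r * (A + B)) := by rw [he, ← e2]; ring
      exact mul_left_cancel₀ (ne_of_gt hs0) h3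
    have tB : 0 ≤ B * (A + r - C) := mul_nonneg hB0 (by linarith)
    have tA : 0 ≤ A * (r + D - B) := mul_nonneg hA0 (by linarith)
    have tsum : B * (A + r - C) + A * (r + D - B) = 0 := by linear_combination -e1
    have eB : B * (A + r - C) = 0 := by linarith
    have eA : A * (r + D - B) = 0 := by linarith
    -- v is a segment point
    have hv : v ∈ ({p, q} : Set M) := by
      rw [← hseg]
      exact e2
    rcases hv with hv | hv
    · -- v = p : impossible
      exfalso
      have hCp : C = 0 := by rw [hC, hv, dist_self]
      have hDp : D = s := by rw [hD, hv, hs, dist_comm]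
      rcases mul_eq_zero.mp eB with hB' | h0
      · -- B = 0, so A ≥ s, then eA gives contradiction
        rcases mul_eq_zero.mp eA with hA' | h1
        · linarith
        · linarith
      · linarith
    · -- v = q
      have hv' : v = q := hv
      have hCq : C = s := by rw [hC, hv', hs, dist_comm]
      have hDq : D = 0 := by rw [hD, hv', dist_self]
      rcases mul_eq_zero.mp eA with hA' | h1
      · exact ⟨by rw [← dist_eq_zero]; exact hA', hv'⟩
      · -- B = r
        have hBr : B = r := by linarith
        rcases mul_eq_zero.mp eB with hB' | h0
        · exact absurd (by rw [hv', ← dist_eq_zero]; exact hB' : u = v) huv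
        · -- s = A + B, so u ∈ {p,q}, u ≠ q gives u = p
          have hu : u ∈ ({p, q} : Set M) := by
            rw [← hseg]
            show s = A + B
            linarith
          rcases hu with hu | hu
          · exact ⟨hu, hv'⟩
          · exact absurd (by rw [hu, hv']) huv

/-- The exposing property for a single molecule. -/
lemma molecule_exposed (o p q : M) (hpq : p ≠ q)
    (hseg : {z : M | dist p q = dist z p + dist z q} = {p, q})
    (g : Lip0 M o) (hg : ∀ t, g t = magicFun o p q t)
    (u v : M) (huv : u ≠ v) (h1 : molecule o u v g = 1) :
    u = p ∧ v = q := by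
  have hd : 0 < dist u v := dist_pos.2 huv
  have h2 : g u - g v = dist u v := by
    rw [molecule_apply'] at h1
    field_simp at h1
    linarith
  rw [hg u, hg v] at h2
  exact (magic_key o p q u v hpq hseg huv).2 h2

lemma molecule_le_one (o p q : M) (hpq : p ≠ q)
    (hseg : {z : M | dist p q = dist z p + dist z q} = {p, q})
    (g : Lip0 M o) (hg : ∀ t, g t = magicFun o p q t)
    (u v : M) (huv : u ≠ v) : molecule o u v g ≤ 1 := by
  have hd : 0 < dist u v := dist_pos.2 huv
  rw [molecule_apply', hg u, hg v]
  rw [inv_mul_le_iff₀ hd, mul_one]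
  exact (magic_key o p q u v hpq hseg huv).1

end AuxMagic

/-- If `[p,q] = {p,q}`, then the magic function exposes `m_{pq}` among finitely supported
elements of the unit ball: any `μ = Σᵢ aᵢ m_{pᵢqᵢ}` with `Σ|aᵢ| ≤ 1` and `⟨μ, f_{pq}⟩ = 1`
equals `m_{pq}`. -/
theorem stmt_17 {M : Type*} [MetricSpace M] (o p q : M) (hpq : p ≠ q)
    (hseg : {z : M | dist p q = dist z p + dist z q} = {p, q})
    (g : Lip0 M o) (hg : ∀ t, g t = magicFun o p q t)
    (n : ℕ) (a : Fin n → ℝ) (ps qs : Fin n → M) (hne : ∀ i, ps i ≠ qs i)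
    (μ : StrongDual ℝ (Lip0 M o)) (hμ : μ = ∑ i, a i • molecule o (ps i) (qs i))
    (ha : ∑ i, |a i| ≤ 1) (hpair : μ g = 1) :
    μ = molecule o p q := by
  set c : Fin n → ℝ := fun i => molecule o (ps i) (qs i) g with hc
  have hμg : ∑ i, a i * c i = 1 := by
    rw [hμ] at hpair
    rw [← hpair]
    simp only [hc, ContinuousLinearMap.coe_sum', Finset.sum_apply,
      ContinuousLinearMap.coe_smul', Pi.smul_apply, smul_eq_mul]
  have habs : ∀ i, |c i| ≤ 1 := by
    intro i
    rw [abs_le]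
    constructor
    · have h := molecule_le_one o p q hpq hseg g hg (qs i) (ps i) (hne i).symm
      rw [molecule_symm'] at h
      simp only [ContinuousLinearMap.neg_apply] at h
      simp only [hc]
      linarith
    · exact molecule_le_one o p q hpq hseg g hg (ps i) (qs i) (hne i)
  have hterm : ∀ i, a i * c i ≤ |a i| := fun i => by
    calc a i * c i ≤ |a i * c i| := le_abs_self _
      _ = |a i| * |c i| := abs_mul _ _
      _ ≤ |a i| * 1 := mul_le_mul_of_nonneg_left (habs i) (abs_nonneg _)
      _ = |a i| := mul_one _
  have hsum1 : ∑ i, |a i| = 1 := le_antisymm ha (by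
    calc (1:ℝ) = ∑ i, a i * c i := hμg.symm
      _ ≤ ∑ i, |a i| := Finset.sum_le_sum fun i _ => hterm i)
  have heach : ∀ i ∈ Finset.univ, a i * c i = |a i| :=
    (Finset.sum_eq_sum_iff_of_le (fun i _ => hterm i)).mp (by rw [hμg, hsum1])
  have hmol : ∀ i, a i • molecule o (ps i) (qs i) = |a i| • molecule o p q := by
    intro i
    have hei := heach i (Finset.mem_univ i)
    rcases lt_trichotomy (a i) 0 with hlt | heq0 | hgt
    · -- negative coefficient : c i = -1
      have hci : c i = -1 := by
        rw [abs_of_neg hlt] at hei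
        have h' : a i * c i = a i * (-1) := by rw [mul_neg_one]; linarith
        exact mul_left_cancel₀ (ne_of_lt hlt) h'
      have h1 : molecule o (qs i) (ps i) g = 1 := by
        rw [molecule_symm']
        simp only [ContinuousLinearMap.neg_apply]
        rw [show molecule o (ps i) (qs i) g = c i from rfl, hci]
        norm_num
      obtain ⟨hq, hp⟩ := molecule_exposed o p q hpq hseg g hg (qs i) (ps i)
        (hne i).symm h1
      rw [hp, hq, molecule_symm', abs_of_neg hlt, smul_neg, ← neg_smul]
    · simp [heq0]
    · -- positive coefficient : c i = 1
      have hci : c i = 1 := by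
        rw [abs_of_pos hgt] at hei
        have h' : a i * c i = a i * 1 := by rw [mul_one]; linarith
        exact mul_left_cancel₀ (ne_of_gt hgt) h'
      obtain ⟨hp, hq⟩ := molecule_exposed o p q hpq hseg g hg (ps i) (qs i)
        (hne i) hci
      rw [hp, hq, abs_of_pos hgt]
  calc μ = ∑ i, a i • molecule o (ps i) (qs i) := hμ
    _ = ∑ i, |a i| • molecule o p q := Finset.sum_congr rfl fun i _ => hmol i
    _ = (∑ i, |a i|) • molecule o p q := (Finset.sum_smul).symm
    _ = molecule o p q := by rw [hsum1, one_smul]
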